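/- Let N be a geometric random variable with parameter a ∈ (0,1), and let (X_n)_{n≥1} be i.i.d. geometric random variables with parameter b ∈ (0,1), independent of N. Then the random variable S = 1 + Σ_{n=1}^{N} (X_n − 1) is geometric with parameter ab/(1 − b + ab). -/

import Mathlib

open MeasureTheory ProbabilityTheory
open scoped ENNReal

lemma geomAux_summable {c : ℝ} (hc : c ∈ Set.Ioo (0:ℝ) 1) :
    Summable (fun k : ℕ => c * (1 - c) ^ k) :=
  (summable_geometric_of_lt_one (by linarith [hc.2]) (by linarith [hc.1])).mul_left c

lemma geomAux_tsum {c : ℝ} (hc : c ∈ Set.Ioo (0:ℝ) 1) :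
    ∑' k : ℕ, c * (1 - c) ^ k = 1 := by
  rw [tsum_mul_left, tsum_geometric_of_lt_one (by linarith [hc.2]) (by linarith [hc.1])]
  have : (1:ℝ) - (1 - c) = c := by ring
  rw [this]
  exact div_self (ne_of_gt hc.1)

lemma geomAux_null_zero {Ω : Type*} [MeasurableSpace Ω] (μ : Measure Ω)
    [IsProbabilityMeasure μ] {c : ℝ} (hc : c ∈ Set.Ioo (0:ℝ) 1) {Y : Ω → ℕ}
    (hYm : Measurable Y)
    (hY : ∀ k : ℕ, 1 ≤ k → μ {ω | Y ω = k} = ENNReal.ofReal (c * (1 - c) ^ (k - 1))) :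
    μ {ω | Y ω = 0} = 0 := by
  have hdisj : Pairwise (Function.onFun Disjoint (fun k : ℕ => {ω | Y ω = k})) := by
    intro i j hij
    exact Set.disjoint_left.2 (fun ω hi hj => hij (hi.symm.trans hj))
  have hmeas : ∀ k : ℕ, MeasurableSet {ω | Y ω = k} := fun k => hYm (measurableSet_singleton k)
  have hunion : (⋃ k : ℕ, {ω | Y ω = k}) = Set.univ := by ext ω; simp
  have h1 : (1 : ℝ≥0∞) = ∑' k : ℕ, μ {ω | Y ω = k} := by
    rw [← measure_iUnion hdisj hmeas, hunion, measure_univ]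
  rw [tsum_eq_zero_add' ENNReal.summable] at h1
  have h2 : ∑' k : ℕ, μ {ω | Y ω = k + 1} = 1 := by
    have hh : ∀ k : ℕ, μ {ω | Y ω = k + 1} = ENNReal.ofReal (c * (1 - c) ^ k) := by
      intro k
      rw [hY (k+1) (by omega)]
      simp
    rw [tsum_congr hh, ← ENNReal.ofReal_tsum_of_nonneg
      (fun k => mul_nonneg hc.1.le (pow_nonneg (by linarith [hc.2]) k)) (geomAux_summable hc),
      geomAux_tsum hc, ENNReal.ofReal_one]
  rw [h2, add_comm] at h1
  have h3 : (1:ℝ≥0∞) + μ {ω | Y ω = 0} = 1 + 0 := by rw [← h1, add_zero]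
  exact (ENNReal.add_right_inj ENNReal.one_ne_top).1 h3

lemma geomAux_conv {Ω : Type*} [MeasurableSpace Ω] {μ : Measure Ω}
    {Y Z : Ω → ℕ} (hYm : Measurable Y) (hZm : Measurable Z)
    (hind : IndepFun Y Z μ) (j : ℕ) :
    μ {ω | Y ω + Z ω = j}
      = ∑ i ∈ Finset.range (j+1), μ {ω | Y ω = i} * μ {ω | Z ω = j - i} := by
  have hset : {ω | Y ω + Z ω = j}
      = ⋃ i ∈ Finset.range (j+1), ({ω | Y ω = i} ∩ {ω | Z ω = j - i}) := by
    ext ω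
    simp only [Set.mem_setOf_eq, Set.mem_iUnion, Finset.mem_range, Set.mem_inter_iff,
      Set.mem_setOf_eq]
    constructor
    · intro h
      exact ⟨Y ω, by omega, rfl, by omega⟩
    · rintro ⟨i, hi, h1, h2⟩
      omega
  rw [hset, measure_biUnion_finset]
  · refine Finset.sum_congr rfl (fun i _ => ?_)
    exact hind.measure_inter_preimage_eq_mul {i} {j - i}
      (measurableSet_singleton i) (measurableSet_singleton (j - i))
  · intro i _ i' _ hii'
    refine Set.disjoint_left.2 (fun ω hωi hωi' => hii' ?_)
    exact hωi.1.symm.trans hωi'.1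
  · intro i _
    exact (hYm (measurableSet_singleton i)).inter (hZm (measurableSet_singleton (j - i)))

lemma geomAux_chooseSum (m j : ℕ) :
    ∑ i ∈ Finset.range (j+1), (i + m - 1).choose i = (j + m).choose j := by
  rcases m with _ | s
  · rw [Finset.sum_eq_single 0]
    · simp
    · intro i _ hi
      have h0 : i + 0 - 1 = i - 1 := by omega
      have h2 : i - 1 < i := by omega
      rw [h0, Nat.choose_eq_zero_of_lt h2]
    · simp
  · have h1 : ∀ i ∈ Finset.range (j+1), (i + (s+1) - 1).choose i = (i + s).choose s := by
      intro i _
      have : i + (s+1) - 1 = i + s := by omega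
      rw [this, Nat.choose_symm_add]
    rw [Finset.sum_congr rfl h1, Nat.sum_range_add_choose j s]
    have : j + (s+1) = j + s + 1 := by omega
    have h2 : j + s + 1 = (s+1) + j := by omega
    rw [this, h2, Nat.choose_symm_add]

lemma geomAux_indep {Ω ι : Type*} [MeasurableSpace Ω] {μ : Measure Ω}
    {f : ι → Ω → ℕ} (hfm : ∀ i, Measurable (f i))
    (hindep : iIndepFun (m := fun _ : ι => inferInstance) f μ)
    (S T : Finset ι) (hST : Disjoint S T)
    (φ : (S → ℕ) → ℕ) (ψ : (T → ℕ) → ℕ) :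
    IndepFun (fun ω => φ (fun i => f i ω)) (fun ω => ψ (fun i => f i ω)) μ :=
  (hindep.indepFun_finset S T hST hfm).comp (measurable_of_countable φ)
    (measurable_of_countable ψ)

/-- **A geometric sum of i.i.d. geometric variables is geometric.**
Let `N` be a geometric random variable with parameter `a ∈ (0,1)` (i.e. taking values in
the positive integers, with `P(N = k) = a * (1-a)^(k-1)` for every `k ≥ 1`), and let
`(X n)` be i.i.d. geometric random variables with parameter `b ∈ (0,1)`, with the whole
family `N, X 0, X 1, …` independent.  Then `S = 1 + ∑_{n=1}^{N} (X n - 1)` is geometric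
with parameter `a*b / (1 - b + a*b)`. -/
theorem geometric_sum_of_geometrics
    {Ω : Type*} [MeasurableSpace Ω] (μ : Measure Ω) [IsProbabilityMeasure μ]
    (a b : ℝ) (ha : a ∈ Set.Ioo (0:ℝ) 1) (hb : b ∈ Set.Ioo (0:ℝ) 1)
    (N : Ω → ℕ) (X : ℕ → Ω → ℕ)
    (hNmeas : Measurable N) (hXmeas : ∀ n, Measurable (X n))
    (hN : ∀ k : ℕ, 1 ≤ k → μ {ω | N ω = k} = ENNReal.ofReal (a * (1 - a) ^ (k - 1)))
    (hX : ∀ n, ∀ k : ℕ, 1 ≤ k →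
      μ {ω | X n ω = k} = ENNReal.ofReal (b * (1 - b) ^ (k - 1)))
    (hindep : iIndepFun (m := fun _ : Option ℕ => inferInstance)
      (fun i : Option ℕ => Option.elim i N X) μ) :
    ∀ k : ℕ, 1 ≤ k →
      μ {ω | 1 + ∑ n ∈ Finset.Icc 1 (N ω), (X n ω - 1) = k}
        = ENNReal.ofReal
            ((a * b / (1 - b + a * b)) * (1 - a * b / (1 - b + a * b)) ^ (k - 1)) := by
  obtain ⟨ha0, ha1⟩ := ha
  obtain ⟨hb0, hb1⟩ := hb
  have h1a : (0:ℝ) ≤ 1 - a := by linarith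
  have h1b : (0:ℝ) ≤ 1 - b := by linarith
  set f : Option ℕ → Ω → ℕ := fun i : Option ℕ => Option.elim i N X with hf
  have hfm : ∀ i, Measurable (f i) := by rintro (_|n); exacts [hNmeas, hXmeas n]
  have hN0 : μ {ω | N ω = 0} = 0 := geomAux_null_zero μ ⟨ha0, ha1⟩ hNmeas hN
  have hX0 : ∀ n, μ {ω | X n ω = 0} = 0 :=
    fun n => geomAux_null_zero μ ⟨hb0, hb1⟩ (hXmeas n) (hX n)
  -- distribution of the shifted variables `X n - 1`
  have hXs : ∀ n (i : ℕ), μ {ω | X n ω - 1 = i} = ENNReal.ofReal (b * (1 - b) ^ i) := by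
    intro n i
    rcases i with _ | i'
    · have hset : {ω | X n ω - 1 = 0} = {ω | X n ω = 0} ∪ {ω | X n ω = 1} := by
        ext ω
        simp only [Set.mem_setOf_eq, Set.mem_union]
        omega
      have h1 : μ {ω | X n ω - 1 = 0} ≤ μ {ω | X n ω = 1} := by
        rw [hset]
        calc μ ({ω | X n ω = 0} ∪ {ω | X n ω = 1})
            ≤ μ {ω | X n ω = 0} + μ {ω | X n ω = 1} := measure_union_le _ _
          _ = μ {ω | X n ω = 1} := by rw [hX0 n, zero_add]
      have h2 : μ {ω | X n ω = 1} ≤ μ {ω | X n ω - 1 = 0} := by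
        rw [hset]; exact measure_mono Set.subset_union_right
      rw [le_antisymm h1 h2, hX n 1 le_rfl]
    · have hset : {ω | X n ω - 1 = i' + 1} = {ω | X n ω = i' + 2} := by
        ext ω
        simp only [Set.mem_setOf_eq]
        omega
      rw [hset, hX n (i'+2) (by omega)]
      norm_num
  -- measurability of the partial sums
  have hgm : ∀ m : ℕ, Measurable (fun ω => ∑ n ∈ Finset.Icc 1 m, (X n ω - 1)) := by
    intro m
    apply Finset.measurable_sum
    intro n _
    exact (measurable_from_top (f := fun t : ℕ => t - 1)).comp (hXmeas n)
  -- independence of the partial sum and the next term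
  have hind1 : ∀ m : ℕ, IndepFun (fun ω => ∑ n ∈ Finset.Icc 1 m, (X n ω - 1))
      (fun ω => X (m+1) ω - 1) μ := by
    intro m
    set S : Finset (Option ℕ) := (Finset.Icc 1 m).image some with hS
    set T : Finset (Option ℕ) := {some (m+1)} with hT
    have hST : Disjoint S T := by
      rw [hS, hT, Finset.disjoint_singleton_right, Finset.mem_image]
      rintro ⟨n, hn, hsome⟩
      rw [Finset.mem_Icc] at hn
      have : n = m + 1 := Option.some_injective ℕ hsome
      omega
    have h := geomAux_indep hfm hindep S T hST
      (fun v => ∑ i : {x // x ∈ S}, (v i - 1))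
      (fun v => v ⟨some (m+1), Finset.mem_singleton_self _⟩ - 1)
    have e1 : (fun ω => (fun v : {x // x ∈ S} → ℕ => ∑ i : {x // x ∈ S}, (v i - 1))
        (fun i => f i ω)) = (fun ω => ∑ n ∈ Finset.Icc 1 m, (X n ω - 1)) := by
      funext ω
      show ∑ i : {x // x ∈ S}, (f (i : Option ℕ) ω - 1) = _
      rw [Finset.sum_coe_sort S (fun i => f i ω - 1), hS,
        Finset.sum_image (fun x _ y _ h => Option.some_injective ℕ h)]
      rfl
    have e2 : (fun ω => (fun v : {x // x ∈ T} → ℕ =>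
        v ⟨some (m+1), Finset.mem_singleton_self _⟩ - 1) (fun i => f i ω))
        = (fun ω => X (m+1) ω - 1) := rfl
    rwa [e1, e2] at h
  -- independence of `N` and the partial sums
  have hind2 : ∀ m : ℕ, IndepFun N (fun ω => ∑ n ∈ Finset.Icc 1 m, (X n ω - 1)) μ := by
    intro m
    set S : Finset (Option ℕ) := {none} with hS
    set T : Finset (Option ℕ) := (Finset.Icc 1 m).image some with hT
    have hST : Disjoint S T := by
      rw [hS, hT, Finset.disjoint_singleton_left, Finset.mem_image]
      rintro ⟨n, _, hsome⟩
      exact Option.some_ne_none n hsome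
    have h := geomAux_indep hfm hindep S T hST
      (fun v => v ⟨none, Finset.mem_singleton_self _⟩)
      (fun v => ∑ i : {x // x ∈ T}, (v i - 1))
    have e1 : (fun ω => (fun v : {x // x ∈ S} → ℕ =>
        v ⟨none, Finset.mem_singleton_self _⟩) (fun i => f i ω)) = N := rfl
    have e2 : (fun ω => (fun v : {x // x ∈ T} → ℕ => ∑ i : {x // x ∈ T}, (v i - 1))
        (fun i => f i ω)) = (fun ω => ∑ n ∈ Finset.Icc 1 m, (X n ω - 1)) := by
      funext ω
      show ∑ i : {x // x ∈ T}, (f (i : Option ℕ) ω - 1) = _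
      rw [Finset.sum_coe_sort T (fun i => f i ω - 1), hT,
        Finset.sum_image (fun x _ y _ h => Option.some_injective ℕ h)]
      rfl
    rwa [e1, e2] at h
  -- the negative binomial distribution of the partial sums
  have hg : ∀ m j : ℕ, μ {ω | (∑ n ∈ Finset.Icc 1 m, (X n ω - 1)) = j}
      = ENNReal.ofReal (((j + m - 1).choose j : ℝ) * (b ^ m * (1 - b) ^ j)) := by
    intro m
    induction m with
    | zero =>
      intro j
      have hz : ∀ ω : Ω, (∑ n ∈ Finset.Icc 1 0, (X n ω - 1)) = 0 := by
        intro ω; simp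
      rcases j with _ | j'
      · have : {ω : Ω | (∑ n ∈ Finset.Icc 1 0, (X n ω - 1)) = 0} = Set.univ := by
          ext ω; simp [hz ω]
        rw [this, measure_univ]
        norm_num
      · have : {ω : Ω | (∑ n ∈ Finset.Icc 1 0, (X n ω - 1)) = j' + 1} = ∅ := by
          ext ω; simp [hz ω]
        rw [this, measure_empty]
        have hc : (j' + 1 + 0 - 1).choose (j' + 1) = 0 :=
          Nat.choose_eq_zero_of_lt (by omega)
        rw [hc]
        norm_num
    | succ m ih =>
      intro j
      have hsplit : {ω : Ω | (∑ n ∈ Finset.Icc 1 (m+1), (X n ω - 1)) = j}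
          = {ω : Ω | (∑ n ∈ Finset.Icc 1 m, (X n ω - 1)) + (X (m+1) ω - 1) = j} := by
        ext ω
        simp only [Set.mem_setOf_eq]
        rw [Finset.sum_Icc_succ_top (by omega : 1 ≤ m + 1)]
      rw [hsplit, geomAux_conv (hgm m)
        (show Measurable (fun ω => X (m+1) ω - 1) from
          (measurable_from_top (f := fun t : ℕ => t - 1)).comp (hXmeas (m+1))) (hind1 m) j]
      have hterm : ∀ i ∈ Finset.range (j+1),
          μ {ω | (∑ n ∈ Finset.Icc 1 m, (X n ω - 1)) = i} * μ {ω | X (m+1) ω - 1 = j - i}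
            = ENNReal.ofReal (((i + m - 1).choose i : ℝ) * (b ^ (m+1) * (1 - b) ^ j)) := by
        intro i hi
        rw [Finset.mem_range] at hi
        rw [ih i, hXs (m+1) (j - i), ← ENNReal.ofReal_mul (mul_nonneg (Nat.cast_nonneg _)
          (mul_nonneg (pow_nonneg hb0.le m) (pow_nonneg h1b i)))]
        congr 1
        have hpow : (1 - b : ℝ) ^ i * (1 - b) ^ (j - i) = (1 - b) ^ j := by
          rw [← pow_add]
          congr 1
          omega
        rw [← hpow]
        ring
      rw [Finset.sum_congr rfl hterm,
        ← ENNReal.ofReal_sum_of_nonneg (fun i _ => mul_nonneg (Nat.cast_nonneg _)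
          (mul_nonneg (pow_nonneg hb0.le (m+1)) (pow_nonneg h1b j))), ← Finset.sum_mul]
      have hcs : ∑ i ∈ Finset.range (j+1), ((i + m - 1).choose i : ℝ)
          = ((j + m).choose j : ℝ) := by
        rw [← Nat.cast_sum, geomAux_chooseSum]
      rw [hcs]
      have : j + (m + 1) - 1 = j + m := by omega
      rw [this]
  -- main computation
  intro k hk
  obtain ⟨j, rfl⟩ : ∃ j, k = j + 1 := ⟨k - 1, by omega⟩
  have hset : {ω | 1 + ∑ n ∈ Finset.Icc 1 (N ω), (X n ω - 1) = j + 1}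
      = ⋃ m : ℕ, ({ω | N ω = m} ∩ {ω | (∑ n ∈ Finset.Icc 1 m, (X n ω - 1)) = j}) := by
    ext ω
    simp only [Set.mem_setOf_eq, Set.mem_iUnion, Set.mem_inter_iff]
    constructor
    · intro h
      exact ⟨N ω, rfl, by omega⟩
    · rintro ⟨m, hm, h⟩
      rw [hm]
      omega
  have hdisj : Pairwise (Function.onFun Disjoint
      (fun m : ℕ => {ω | N ω = m} ∩ {ω | (∑ n ∈ Finset.Icc 1 m, (X n ω - 1)) = j})) := by
    intro m m' hmm'
    refine Set.disjoint_left.2 (fun ω hω hω' => hmm' ?_)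
    exact hω.1.symm.trans hω'.1
  have hmeas : ∀ m : ℕ, MeasurableSet
      ({ω | N ω = m} ∩ {ω | (∑ n ∈ Finset.Icc 1 m, (X n ω - 1)) = j}) := fun m =>
    (hNmeas (measurableSet_singleton m)).inter ((hgm m) (measurableSet_singleton j))
  rw [hset, measure_iUnion hdisj hmeas, tsum_eq_zero_add' ENNReal.summable]
  have hterm0 : μ ({ω | N ω = 0} ∩ {ω | (∑ n ∈ Finset.Icc 1 0, (X n ω - 1)) = j}) = 0 :=
    measure_mono_null Set.inter_subset_left hN0
  rw [hterm0, zero_add]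
  have htermS : ∀ m : ℕ,
      μ ({ω | N ω = m + 1} ∩ {ω | (∑ n ∈ Finset.Icc 1 (m+1), (X n ω - 1)) = j})
        = ENNReal.ofReal ((a * b * (1 - b) ^ j) * (((m + j).choose j : ℝ) * ((1 - a) * b) ^ m)) := by
    intro m
    have h := (hind2 (m+1)).measure_inter_preimage_eq_mul {m+1} {j}
      (measurableSet_singleton (m+1)) (measurableSet_singleton j)
    have hpre : μ ({ω | N ω = m + 1} ∩ {ω | (∑ n ∈ Finset.Icc 1 (m+1), (X n ω - 1)) = j})
        = μ {ω | N ω = m + 1} * μ {ω | (∑ n ∈ Finset.Icc 1 (m+1), (X n ω - 1)) = j} := h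
    rw [hpre, hN (m+1) (by omega), hg (m+1) j, ← ENNReal.ofReal_mul
      (mul_nonneg ha0.le (pow_nonneg h1a _))]
    congr 1
    have e1 : m + 1 - 1 = m := by omega
    have e2 : j + (m + 1) - 1 = j + m := by omega
    have e3 : j + m = m + j := by omega
    rw [e1, e2, e3, mul_pow]
    ring
  rw [tsum_congr htermS]
  have hr : ‖(1 - a) * b‖ < 1 := by
    rw [Real.norm_eq_abs, abs_lt]
    constructor <;> nlinarith
  have hsum : Summable (fun m : ℕ => (a * b * (1 - b) ^ j) *
      (((m + j).choose j : ℝ) * ((1 - a) * b) ^ m)) :=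
    (summable_choose_mul_geometric_of_norm_lt_one j hr).mul_left _
  have hnonneg : ∀ m : ℕ, 0 ≤ (a * b * (1 - b) ^ j) *
      (((m + j).choose j : ℝ) * ((1 - a) * b) ^ m) := by
    intro m
    have : (0:ℝ) ≤ (1 - a) * b := mul_nonneg h1a hb0.le
    exact mul_nonneg (mul_nonneg (mul_nonneg ha0.le hb0.le) (pow_nonneg h1b j))
      (mul_nonneg (Nat.cast_nonneg _) (pow_nonneg this m))
  rw [← ENNReal.ofReal_tsum_of_nonneg hnonneg hsum, tsum_mul_left,
    tsum_choose_mul_geometric_of_norm_lt_one j hr]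
  congr 1
  have hD : (1:ℝ) - (1 - a) * b = 1 - b + a * b := by ring
  have hDpos : (0:ℝ) < 1 - b + a * b := by nlinarith
  have hDne : (1:ℝ) - b + a * b ≠ 0 := ne_of_gt hDpos
  have h1p : 1 - a * b / (1 - b + a * b) = (1 - b) / (1 - b + a * b) := by
    field_simp
    ring
  have hjj : j + 1 - 1 = j := by omega
  rw [hD, h1p, hjj, mul_one_div, div_pow, div_mul_div_comm, pow_succ, div_eq_div_iff
    (mul_ne_zero (pow_ne_zero _ hDne) hDne) (mul_ne_zero hDne (pow_ne_zero _ hDne))]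
  ring
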